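/- Let q ≥ 1 be an integer and let A_{4_1}(L,M) = L²M⁴ + L(−M⁸ − 1 + M⁶ + M² + 2M⁴) + M⁴, viewed as a polynomial in L of degree 2 over ℤ[M]. Then each of the resultants res_L(A_{4_1}(L,M), M·L^{q} − 1) and res_L(A_{4_1}(L,M), L^{q} − M), taken with respect to L, is a nonzero polynomial in ℤ[M] whose leading coefficient and whose lowest-degree nonzero coefficient are each 1 or −1. -/

import Mathlib

open Polynomial

/-- The Sylvester matrix of two polynomials `f` and `g`, of size
`(g.natDegree + f.natDegree) × (g.natDegree + f.natDegree)`: the first `g.natDegree` rows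
carry the coefficients of `f` (from the leading coefficient down), shifted, and the remaining
`f.natDegree` rows carry the coefficients of `g`. -/
noncomputable def sylvesterMatrix {R : Type*} [CommRing R] (f g : R[X]) :
    Matrix (Fin (g.natDegree + f.natDegree)) (Fin (g.natDegree + f.natDegree)) R :=
  fun i j =>
    if (i : ℕ) < g.natDegree then
      (if (i : ℕ) ≤ (j : ℕ) ∧ (j : ℕ) ≤ (i : ℕ) + f.natDegree then
        f.coeff (f.natDegree + (i : ℕ) - (j : ℕ))
      else 0)
    else
      (if (i : ℕ) - g.natDegree ≤ (j : ℕ) ∧ (j : ℕ) ≤ (i : ℕ) - g.natDegree + g.natDegree then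
        g.coeff (g.natDegree + ((i : ℕ) - g.natDegree) - (j : ℕ))
      else 0)

/-- The resultant `res_x(f, g)` of two polynomials, i.e. the determinant of their
Sylvester matrix. -/
noncomputable def resultant {R : Type*} [CommRing R] (f g : R[X]) : R :=
  (sylvesterMatrix f g).det

/-- The A-polynomial of the figure-eight knot, as a polynomial in `L` over `ℤ[M]`. -/
noncomputable def A41poly : Polynomial (Polynomial ℤ) :=
  Polynomial.C (Polynomial.X ^ 4) * Polynomial.X ^ 2 +
    Polynomial.C (-Polynomial.X ^ 8 - 1 + Polynomial.X ^ 6 + Polynomial.X ^ 2 +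
      2 * Polynomial.X ^ 4) * Polynomial.X +
    Polynomial.C (Polynomial.X ^ 4)


namespace Res41



noncomputable def phi : Polynomial ℤ →+* (Polynomial ℤ ⧸ Ideal.span {(X : Polynomial ℤ) ^ 2}) :=
  Ideal.Quotient.mk _

lemma phi_eq_iff {p r : ℤ[X]} :
    phi p = phi r ↔ p.coeff 0 = r.coeff 0 ∧ p.coeff 1 = r.coeff 1 := by
  rw [phi, Ideal.Quotient.eq, Ideal.mem_span_singleton, X_pow_dvd_iff]
  constructor
  · intro h
    refine ⟨?_, ?_⟩
    · have := h 0 (by norm_num); simpa [sub_eq_zero] using this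
    · have := h 1 (by norm_num); simpa [sub_eq_zero] using this
  · rintro ⟨h0, h1⟩ d hd
    interval_cases d <;> simp [h0, h1]

lemma phi_X_sq : phi ((X : ℤ[X]) ^ 2) = 0 :=
  Ideal.Quotient.eq_zero_iff_mem.mpr (Ideal.mem_span_singleton_self _)

lemma phi_X_four : phi ((X : ℤ[X]) ^ 4) = 0 := by
  have h : (X : ℤ[X]) ^ 4 = X ^ 2 * X ^ 2 := by ring
  rw [h, _root_.map_mul, phi_X_sq, mul_zero]

lemma natDegree_unit_smul (u : ℤˣ) (p : ℤ[X]) : (u • p).natDegree = p.natDegree := by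
  rcases Int.units_eq_one_or u with h | h <;> simp [h, Units.smul_def]

lemma natDegree_det_le {n : ℕ} (A : Matrix (Fin n) (Fin n) ℤ[X]) (d : Fin n → ℕ)
    (h : ∀ i j, (A i j).natDegree ≤ d i) : A.det.natDegree ≤ ∑ i, d i := by
  rw [Matrix.det_apply]
  apply Polynomial.natDegree_sum_le_of_forall_le
  intro σ _
  rw [natDegree_unit_smul]
  calc (∏ i, A (σ i) i).natDegree ≤ ∑ i, (A (σ i) i).natDegree :=
        Polynomial.natDegree_prod_le _ _
    _ ≤ ∑ i, d (σ i) := Finset.sum_le_sum fun i _ => h (σ i) i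
    _ = ∑ i, d i := Equiv.sum_comp σ d

lemma reflect_prod {ι : Type*} (s : Finset ι) (f : ι → ℤ[X]) (d : ι → ℕ)
    (h : ∀ i ∈ s, (f i).natDegree ≤ d i) :
    (∏ i ∈ s, f i).reflect (∑ i ∈ s, d i) = ∏ i ∈ s, (f i).reflect (d i) := by
  classical
  induction s using Finset.induction with
  | empty => simp
  | @insert a s ha ih =>
    rw [Finset.prod_insert ha, Finset.sum_insert ha,
      Polynomial.reflect_mul _ _ (h a (Finset.mem_insert_self a s))
        (le_trans (Polynomial.natDegree_prod_le _ _)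
          (Finset.sum_le_sum fun i hi => h i (Finset.mem_insert_of_mem hi))),
      ih (fun i hi => h i (Finset.mem_insert_of_mem hi)), Finset.prod_insert ha]

lemma reflect_det {n : ℕ} (A : Matrix (Fin n) (Fin n) ℤ[X]) (d : Fin n → ℕ)
    (h : ∀ i j, (A i j).natDegree ≤ d i) :
    (A.det).reflect (∑ i, d i) = Matrix.det (Matrix.of fun i j => (A i j).reflect (d i)) := by
  classical
  rw [Matrix.det_apply, Matrix.det_apply]
  have hadd : ∀ p r : ℤ[X], (p + r).reflect (∑ i, d i) = p.reflect _ + r.reflect _ :=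
    fun p r => Polynomial.reflect_add p r _
  let Φ : ℤ[X] →+ ℤ[X] :=
    { toFun := fun p => p.reflect (∑ i, d i)
      map_zero' := Polynomial.reflect_zero
      map_add' := fun p r => Polynomial.reflect_add p r _ }
  have : (∑ σ : Equiv.Perm (Fin n), Equiv.Perm.sign σ • ∏ i, A (σ i) i).reflect (∑ i, d i)
      = ∑ σ : Equiv.Perm (Fin n), Φ (Equiv.Perm.sign σ • ∏ i, A (σ i) i) := map_sum Φ _ _
  rw [this]
  refine Finset.sum_congr rfl fun σ _ => ?_
  have key : (∏ i, A (σ i) i).reflect (∑ i, d i) = ∏ i, (A (σ i) i).reflect (d (σ i)) := by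
    rw [← Equiv.sum_comp σ d]
    exact reflect_prod Finset.univ _ _ fun i _ => h (σ i) i
  rcases Int.units_eq_one_or (Equiv.Perm.sign σ) with hs | hs <;>
    simp [Φ, hs, Units.smul_def, key, Matrix.of_apply]


lemma det_key {R : Type*} [CommRing R] (q : ℕ) (hq : 1 ≤ q)
    (B : Matrix (Fin (q + 2)) (Fin (q + 2)) R) (u v : R)
    (hband : ∀ i j : Fin (q + 2), (i : ℕ) < q →
      B i j = if (j : ℕ) = (i : ℕ) + 1 then -1 else 0)
    (hrow1 : ∀ i j : Fin (q + 2), (i : ℕ) = q →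
      B i j = if (j : ℕ) = 0 then u else if (j : ℕ) = q then v else 0)
    (hrow2 : ∀ i j : Fin (q + 2), (i : ℕ) = q + 1 →
      B i j = if (j : ℕ) = 1 then u else if (j : ℕ) = q + 1 then v else 0) :
    B.det = u * v := by
  have hqlt : q < q + 2 := by omega
  rw [Matrix.det_succ_column_zero]
  rw [Finset.sum_eq_single (⟨q, hqlt⟩ : Fin (q + 2))]
  · have hB0 : B ⟨q, hqlt⟩ 0 = u := by
      rw [hrow1 _ _ rfl]
      simp
    rw [hB0]
    -- the minor
    set M' := B.submatrix (Fin.succAbove ⟨q, hqlt⟩) Fin.succ with hM'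
    have hsA : ∀ i : Fin (q + 1),
        (((⟨q, hqlt⟩ : Fin (q + 2)).succAbove i : Fin (q + 2)) : ℕ)
          = if (i : ℕ) < q then (i : ℕ) else (i : ℕ) + 1 := by
      intro i
      by_cases h : (i : ℕ) < q
      · rw [Fin.succAbove_of_castSucc_lt, if_pos h, Fin.coe_castSucc]
        rw [Fin.lt_def]
        simpa using h
      · rw [Fin.succAbove_of_le_castSucc, if_neg h, Fin.val_succ]
        rw [Fin.le_def]
        simp only [Fin.coe_castSucc]
        omega
    have htri : M'.BlockTriangular OrderDual.toDual := by
      intro i j hij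
      have hij' : (i : ℕ) < (j : ℕ) := hij
      have hj : (j : ℕ) ≤ q := by omega
      rw [hM', Matrix.submatrix_apply]
      by_cases h : (i : ℕ) < q
      · rw [hband _ _ (by rw [hsA, if_pos h]; exact h)]
        rw [if_neg]
        rw [Fin.val_succ, hsA, if_pos h]
        omega
      · exfalso; have := i.isLt; omega
    rw [Matrix.det_of_lowerTriangular M' htri]
    have hdiag : ∀ i : Fin (q + 1), M' i i = if (i : ℕ) < q then -1 else v := by
      intro i
      rw [hM', Matrix.submatrix_apply]
      by_cases h : (i : ℕ) < q
      · rw [hband _ _ (by rw [hsA, if_pos h]; exact h), if_pos h, if_pos]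
        rw [Fin.val_succ, hsA, if_pos h]
      · have hiq : (i : ℕ) = q := by have := i.isLt; omega
        rw [hrow2 _ _ (by rw [hsA, if_neg h, hiq]), if_neg h]
        rw [Fin.val_succ, hiq, if_neg (by omega), if_pos rfl]
    have hprod : (∏ i : Fin (q + 1), M' i i) = (-1) ^ q * v := by
      rw [Fin.prod_univ_castSucc]
      have h1 : ∀ i : Fin q, M' i.castSucc i.castSucc = -1 := by
        intro i
        rw [hdiag]
        simp [i.isLt]
      have h2 : M' (Fin.last q) (Fin.last q) = v := by
        rw [hdiag]
        simp
      rw [h2, Finset.prod_congr rfl fun i _ => h1 i]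
      simp
    rw [hprod]
    have : ((-1 : R) ^ q) * ((-1 : R) ^ q) = 1 := by
      rw [← mul_pow]; norm_num
    calc (-1 : R) ^ (((⟨q, hqlt⟩ : Fin (q + 2)) : ℕ)) * u * ((-1) ^ q * v)
        = ((-1 : R) ^ q * (-1) ^ q) * (u * v) := by ring
      _ = u * v := by rw [this, one_mul]
  · intro b _ hb
    have hb0 : B b 0 = 0 := by
      have hcases : (b : ℕ) < q ∨ (b : ℕ) = q ∨ (b : ℕ) = q + 1 := by
        have := b.isLt; omega
      rcases hcases with h | h | h
      · rw [hband _ _ h]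
        simp
      · exact absurd (Fin.ext h : b = ⟨q, hqlt⟩) hb
      · rw [hrow2 _ _ h]
        have : ((0 : Fin (q + 2)) : ℕ) = 0 := rfl
        rw [this, if_neg (by omega), if_neg (by omega)]
    rw [hb0, mul_zero, zero_mul]
  · intro h
    exact absurd (Finset.mem_univ _) h

noncomputable def bpoly : ℤ[X] := -X ^ 8 - 1 + X ^ 6 + X ^ 2 + 2 * X ^ 4

lemma A41_coeff0 : A41poly.coeff 0 = X ^ 4 := by
  simp only [A41poly, coeff_add, coeff_C_mul, coeff_X_pow, coeff_C, coeff_X]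
  norm_num

lemma A41_coeff1 : A41poly.coeff 1 = bpoly := by
  simp only [A41poly, bpoly, coeff_add, coeff_C_mul, coeff_X_pow, coeff_C, coeff_X]
  norm_num

lemma A41_coeff2 : A41poly.coeff 2 = X ^ 4 := by
  simp only [A41poly, coeff_add, coeff_C_mul, coeff_X_pow, coeff_C, coeff_X]
  norm_num

lemma A41_natDegree_le : A41poly.natDegree ≤ 2 := by
  unfold A41poly
  compute_degree

lemma A41_natDegree : A41poly.natDegree = 2 :=
  natDegree_eq_of_le_of_coeff_ne_zero A41_natDegree_le
    (by rw [A41_coeff2]; exact pow_ne_zero _ X_ne_zero)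

lemma A41_coeff_high : ∀ k, 3 ≤ k → A41poly.coeff k = 0 := by
  intro k hk
  apply coeff_eq_zero_of_natDegree_lt
  rw [A41_natDegree]
  omega

lemma bpoly_natDegree_le : bpoly.natDegree ≤ 8 := by
  unfold bpoly
  compute_degree

lemma A41_coeff_bound : ∀ k, (A41poly.coeff k).natDegree ≤ 8 := by
  intro k
  match k with
  | 0 => rw [A41_coeff0]; simp [natDegree_X_pow]
  | 1 => rw [A41_coeff1]; exact bpoly_natDegree_le
  | 2 => rw [A41_coeff2]; simp [natDegree_X_pow]
  | (n+3) => rw [A41_coeff_high _ (by omega)]; simp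

lemma phi_bpoly : phi bpoly = -1 := by
  have h : phi bpoly = phi (-1) := by
    rw [phi_eq_iff]
    constructor <;> simp [bpoly]
  rw [h, map_neg, _root_.map_one]

lemma phi_bpoly_reflect : phi (bpoly.reflect 8) = -1 := by
  have h : phi (bpoly.reflect 8) = phi (-1) := by
    rw [phi_eq_iff]
    constructor <;>
      simp [Polynomial.coeff_reflect, Polynomial.revAt_le, bpoly]
  rw [h, map_neg, _root_.map_one]

lemma phi_X4_reflect : phi (((X : ℤ[X]) ^ 4).reflect 8) = 0 := by
  have h : phi (((X : ℤ[X]) ^ 4).reflect 8) = phi 0 := by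
    rw [phi_eq_iff]
    constructor <;> simp [Polynomial.coeff_reflect, Polynomial.revAt_le]
  rw [h, map_zero]

lemma reflect_two_negX : ((-X : ℤ[X])).reflect 2 = -X := by
  rw [Polynomial.reflect_neg, ← pow_one (X : ℤ[X]), Polynomial.reflect_monomial,
    Polynomial.revAt_le (by norm_num), pow_one]

lemma main (q : ℕ) (hq : 1 ≤ q) (g : Polynomial (Polynomial ℤ)) (hdeg : g.natDegree = q)
    (h0 : ∀ k, k ≠ 0 → k ≠ q → g.coeff k = 0)
    (hb0 : (g.coeff 0).natDegree ≤ 1) (hbq : (g.coeff q).natDegree ≤ 1)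
    (hprodg : g.coeff q * g.coeff 0 = -X) :
    _root_.resultant A41poly g ≠ 0 ∧ (_root_.resultant A41poly g).leadingCoeff = -1 ∧
      (_root_.resultant A41poly g).trailingCoeff = -1 := by
  classical
  have hgb : ∀ k, (g.coeff k).natDegree ≤ 1 := by
    intro k
    by_cases h1 : k = 0
    · rw [h1]; exact hb0
    · by_cases h2 : k = q
      · rw [h2]; exact hbq
      · rw [h0 k h1 h2]; simp
  have hn : g.natDegree + A41poly.natDegree = q + 2 := by rw [hdeg, A41_natDegree]
  set S := sylvesterMatrix A41poly g with hS
  set e : Fin (q + 2) ≃ Fin (g.natDegree + A41poly.natDegree) := finCongr hn.symm with he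
  set T : Matrix (Fin (q + 2)) (Fin (q + 2)) ℤ[X] := S.submatrix e e with hT
  have hdetT : T.det = _root_.resultant A41poly g := Matrix.det_submatrix_equiv_self e S
  have hecoe : ∀ i : Fin (q + 2), ((e i : Fin (g.natDegree + A41poly.natDegree)) : ℕ) = (i : ℕ) := by
    intro i; simp [he]
  have hTentry : ∀ i j : Fin (q + 2), T i j =
      if (i : ℕ) < q then
        (if (i : ℕ) ≤ (j : ℕ) ∧ (j : ℕ) ≤ (i : ℕ) + 2 then
          A41poly.coeff (2 + (i : ℕ) - (j : ℕ)) else 0)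
      else
        (if (i : ℕ) - q ≤ (j : ℕ) ∧ (j : ℕ) ≤ (i : ℕ) - q + q then
          g.coeff (q + ((i : ℕ) - q) - (j : ℕ)) else 0) := by
    intro i j
    show S (e i) (e j) = _
    rw [hS]
    unfold sylvesterMatrix
    rw [hecoe i, hecoe j, hdeg, A41_natDegree]
  -- degree bounds per row
  set dd : Fin (q + 2) → ℕ := fun i => if (i : ℕ) < q then 8 else 1 with hddf
  have hdd : ∀ i j, (T i j).natDegree ≤ dd i := by
    intro i j
    rw [hTentry]
    by_cases h : (i : ℕ) < q
    · simp only [hddf, if_pos h]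
      split
      · exact A41_coeff_bound _
      · simp
    · simp only [hddf, if_neg h]
      split
      · exact le_trans (hgb _) (by norm_num)
      · simp
  have hsum : ∑ i : Fin (q + 2), dd i = 8 * q + 2 := by
    rw [hddf]
    rw [Fin.sum_univ_eq_sum_range (fun k => if k < q then 8 else 1) (q + 2)]
    rw [Finset.sum_range_succ, Finset.sum_range_succ]
    rw [Finset.sum_congr rfl (fun i hi => if_pos (Finset.mem_range.mp hi))]
    rw [if_neg (by omega), if_neg (by omega), Finset.sum_const, Finset.card_range]
    simp [mul_comm]
  -- mod X^2 computation of det T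
  have hD1 : phi T.det = phi (-X) := by
    rw [RingHom.map_det, RingHom.mapMatrix_apply]
    rw [det_key q hq (T.map phi) (phi (g.coeff q)) (phi (g.coeff 0)) ?_ ?_ ?_]
    · rw [← _root_.map_mul, hprodg]
    · intro i j hi
      rw [Matrix.map_apply, hTentry, if_pos hi]
      by_cases hj : (j : ℕ) = (i : ℕ) + 1
      · rw [if_pos (by omega), show 2 + (i : ℕ) - (j : ℕ) = 1 by omega, A41_coeff1,
          phi_bpoly, if_pos hj]
      · rw [if_neg hj]
        by_cases hc : (i : ℕ) ≤ (j : ℕ) ∧ (j : ℕ) ≤ (i : ℕ) + 2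
        · have : 2 + (i : ℕ) - (j : ℕ) = 2 ∨ 2 + (i : ℕ) - (j : ℕ) = 0 := by omega
          rcases this with h | h
          · rw [if_pos hc, h, A41_coeff2, phi_X_four]
          · rw [if_pos hc, h, A41_coeff0, phi_X_four]
        · rw [if_neg hc, map_zero]
    · intro i j hi
      rw [Matrix.map_apply, hTentry, if_neg (by omega)]
      by_cases hj0 : (j : ℕ) = 0
      · rw [if_pos (by omega), show q + ((i : ℕ) - q) - (j : ℕ) = q by omega, if_pos hj0]
      · by_cases hjq : (j : ℕ) = q
        · rw [if_pos (by omega), show q + ((i : ℕ) - q) - (j : ℕ) = 0 by omega,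
            if_neg hj0, if_pos hjq]
        · rw [if_neg hj0, if_neg hjq]
          by_cases hc : (i : ℕ) - q ≤ (j : ℕ) ∧ (j : ℕ) ≤ (i : ℕ) - q + q
          · rw [if_pos hc, h0 _ (by omega) (by omega), map_zero]
          · rw [if_neg hc, map_zero]
    · intro i j hi
      rw [Matrix.map_apply, hTentry, if_neg (by omega)]
      by_cases hj1 : (j : ℕ) = 1
      · rw [if_pos (by omega), show q + ((i : ℕ) - q) - (j : ℕ) = q by omega, if_pos hj1]
      · by_cases hjq : (j : ℕ) = q + 1
        · rw [if_pos (by omega), show q + ((i : ℕ) - q) - (j : ℕ) = 0 by omega,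
            if_neg hj1, if_pos hjq]
        · rw [if_neg hj1, if_neg hjq]
          by_cases hc : (i : ℕ) - q ≤ (j : ℕ) ∧ (j : ℕ) ≤ (i : ℕ) - q + q
          · rw [if_pos hc, h0 _ (by omega) (by omega), map_zero]
          · rw [if_neg hc, map_zero]
  -- mod X^2 computation of det of reflected matrix
  set N : Matrix (Fin (q + 2)) (Fin (q + 2)) ℤ[X] :=
    Matrix.of (fun i j => (T i j).reflect (dd i)) with hN
  have hrefl : (T.det).reflect (8 * q + 2) = N.det := by
    rw [← hsum]; exact reflect_det T dd hdd
  have hD2 : phi N.det = phi (-X) := by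
    rw [RingHom.map_det, RingHom.mapMatrix_apply]
    rw [det_key q hq (N.map phi) (phi ((g.coeff q).reflect 1)) (phi ((g.coeff 0).reflect 1))
      ?_ ?_ ?_]
    · rw [← _root_.map_mul, ← Polynomial.reflect_mul _ _ hbq hb0, hprodg]
      rw [reflect_two_negX]
    · intro i j hi
      rw [Matrix.map_apply, hN, Matrix.of_apply, hTentry, if_pos hi,
        show dd i = 8 from if_pos hi]
      by_cases hj : (j : ℕ) = (i : ℕ) + 1
      · rw [if_pos (by omega), show 2 + (i : ℕ) - (j : ℕ) = 1 by omega, A41_coeff1,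
          phi_bpoly_reflect, if_pos hj]
      · rw [if_neg hj]
        by_cases hc : (i : ℕ) ≤ (j : ℕ) ∧ (j : ℕ) ≤ (i : ℕ) + 2
        · have : 2 + (i : ℕ) - (j : ℕ) = 2 ∨ 2 + (i : ℕ) - (j : ℕ) = 0 := by omega
          rcases this with h | h
          · rw [if_pos hc, h, A41_coeff2, phi_X4_reflect]
          · rw [if_pos hc, h, A41_coeff0, phi_X4_reflect]
        · rw [if_neg hc, Polynomial.reflect_zero, map_zero]
    · intro i j hi
      rw [Matrix.map_apply, hN, Matrix.of_apply, hTentry, if_neg (by omega),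
        show dd i = 1 from if_neg (by omega)]
      by_cases hj0 : (j : ℕ) = 0
      · rw [if_pos (by omega), show q + ((i : ℕ) - q) - (j : ℕ) = q by omega, if_pos hj0]
      · by_cases hjq : (j : ℕ) = q
        · rw [if_pos (by omega), show q + ((i : ℕ) - q) - (j : ℕ) = 0 by omega,
            if_neg hj0, if_pos hjq]
        · rw [if_neg hj0, if_neg hjq]
          by_cases hc : (i : ℕ) - q ≤ (j : ℕ) ∧ (j : ℕ) ≤ (i : ℕ) - q + q
          · rw [if_pos hc, h0 _ (by omega) (by omega), Polynomial.reflect_zero, map_zero]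
          · rw [if_neg hc, Polynomial.reflect_zero, map_zero]
    · intro i j hi
      rw [Matrix.map_apply, hN, Matrix.of_apply, hTentry, if_neg (by omega),
        show dd i = 1 from if_neg (by omega)]
      by_cases hj1 : (j : ℕ) = 1
      · rw [if_pos (by omega), show q + ((i : ℕ) - q) - (j : ℕ) = q by omega, if_pos hj1]
      · by_cases hjq : (j : ℕ) = q + 1
        · rw [if_pos (by omega), show q + ((i : ℕ) - q) - (j : ℕ) = 0 by omega,
            if_neg hj1, if_pos hjq]
        · rw [if_neg hj1, if_neg hjq]
          by_cases hc : (i : ℕ) - q ≤ (j : ℕ) ∧ (j : ℕ) ≤ (i : ℕ) - q + q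
          · rw [if_pos hc, h0 _ (by omega) (by omega), Polynomial.reflect_zero, map_zero]
          · rw [if_neg hc, Polynomial.reflect_zero, map_zero]
  -- extract coefficients
  set P : ℤ[X] := T.det with hP
  have hc01 := phi_eq_iff.mp hD1
  have hc0 : P.coeff 0 = 0 := by
    have := hc01.1; simpa using this
  have hc1 : P.coeff 1 = -1 := by
    have := hc01.2; simpa using this
  have hcN := phi_eq_iff.mp hD2
  have hchigh : P.coeff (8 * q + 2) = 0 := by
    have h := hcN.1
    rw [← hrefl, Polynomial.coeff_reflect, Polynomial.revAt_le (by omega)] at h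
    simpa using h
  have hctop : P.coeff (8 * q + 1) = -1 := by
    have h := hcN.2
    rw [← hrefl, Polynomial.coeff_reflect, Polynomial.revAt_le (by omega)] at h
    simpa using h
  have hdle : P.natDegree ≤ 8 * q + 2 := by
    rw [hP, ← hsum]; exact natDegree_det_le T dd hdd
  have hne : P ≠ 0 := by
    intro h
    rw [h] at hc1
    simp at hc1
  have hnat : P.natDegree = 8 * q + 1 := by
    have h1 : 8 * q + 1 ≤ P.natDegree :=
      le_natDegree_of_ne_zero (by rw [hctop]; norm_num)
    have h2 : P.natDegree ≤ 8 * q + 1 := by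
      by_contra hcon
      have heq : P.natDegree = 8 * q + 2 := by omega
      have := Polynomial.leadingCoeff_ne_zero.mpr hne
      rw [Polynomial.leadingCoeff, heq, hchigh] at this
      exact this rfl
    omega
  have htnat : P.natTrailingDegree = 1 := by
    have h1 : P.natTrailingDegree ≤ 1 :=
      natTrailingDegree_le_of_ne_zero (by rw [hc1]; norm_num)
    have h2 : 1 ≤ P.natTrailingDegree := by
      by_contra hcon
      have heq : P.natTrailingDegree = 0 := by omega
      have := Polynomial.trailingCoeff_eq_zero.not.mpr hne
      rw [Polynomial.trailingCoeff, heq, hc0] at this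
      exact this rfl
    omega
  refine ⟨by rw [← hdetT]; exact hne, ?_, ?_⟩
  · rw [← hdetT, Polynomial.leadingCoeff, hnat, hctop]
  · rw [← hdetT, Polynomial.trailingCoeff, htnat, hc1]


end Res41

/-- Lemma 3.2 for the figure-eight knot: the extreme coefficients of
`res_L(A_{4_1}(L,M), M·L^q - 1)` and of `res_L(A_{4_1}(L,M), L^q - M)` are `±1`. -/
theorem resultant_A41_extreme_coeffs (q : ℕ) (hq : 1 ≤ q) :
    (_root_.resultant A41poly (Polynomial.C (Polynomial.X : Polynomial ℤ) * Polynomial.X ^ q - 1) ≠ 0 ∧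
      ((_root_.resultant A41poly
          (Polynomial.C (Polynomial.X : Polynomial ℤ) * Polynomial.X ^ q - 1)).leadingCoeff = 1 ∨
        (_root_.resultant A41poly
          (Polynomial.C (Polynomial.X : Polynomial ℤ) * Polynomial.X ^ q - 1)).leadingCoeff = -1) ∧
      ((_root_.resultant A41poly
          (Polynomial.C (Polynomial.X : Polynomial ℤ) * Polynomial.X ^ q - 1)).trailingCoeff = 1 ∨
        (_root_.resultant A41poly
          (Polynomial.C (Polynomial.X : Polynomial ℤ) * Polynomial.X ^ q - 1)).trailingCoeff = -1)) ∧
    (_root_.resultant A41poly (Polynomial.X ^ q - Polynomial.C (Polynomial.X : Polynomial ℤ)) ≠ 0 ∧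
      ((_root_.resultant A41poly
          (Polynomial.X ^ q - Polynomial.C (Polynomial.X : Polynomial ℤ))).leadingCoeff = 1 ∨
        (_root_.resultant A41poly
          (Polynomial.X ^ q - Polynomial.C (Polynomial.X : Polynomial ℤ))).leadingCoeff = -1) ∧
      ((_root_.resultant A41poly
          (Polynomial.X ^ q - Polynomial.C (Polynomial.X : Polynomial ℤ))).trailingCoeff = 1 ∨
        (_root_.resultant A41poly
          (Polynomial.X ^ q - Polynomial.C (Polynomial.X : Polynomial ℤ))).trailingCoeff = -1)) := by
  have cf1 : ∀ k, (Polynomial.C (Polynomial.X : Polynomial ℤ) * Polynomial.X ^ q - 1).coeff k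
      = (if k = q then (X : ℤ[X]) else 0) - (if k = 0 then 1 else 0) := by
    intro k
    simp [coeff_sub, coeff_C_mul, coeff_X_pow, coeff_one, eq_comm]
  have cf2 : ∀ k, ((Polynomial.X : Polynomial (Polynomial ℤ)) ^ q
        - Polynomial.C (Polynomial.X : Polynomial ℤ)).coeff k
      = (if k = q then (1 : ℤ[X]) else 0) - (if k = 0 then (X : ℤ[X]) else 0) := by
    intro k
    simp [coeff_sub, coeff_X_pow, coeff_C, eq_comm]
  constructor
  · have hdeg1 : (Polynomial.C (Polynomial.X : Polynomial ℤ) * Polynomial.X ^ q - 1).natDegree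
        = q := by
      apply natDegree_eq_of_le_of_coeff_ne_zero
      · exact le_trans (natDegree_sub_le _ _)
          (by simp [natDegree_C_mul_X_pow q (X : ℤ[X]) X_ne_zero])
      · rw [coeff_sub, coeff_C_mul, coeff_X_pow, if_pos rfl, coeff_one,
          if_neg (by omega : ¬ q = 0)]
        simpa using X_ne_zero
    obtain ⟨h1, h2, h3⟩ := Res41.main q hq (Polynomial.C (Polynomial.X : Polynomial ℤ)
        * Polynomial.X ^ q - 1) hdeg1
      (fun k hk0 hkq => by rw [cf1, if_neg hkq, if_neg hk0]; simp)
      (by rw [cf1, if_neg (by omega : ¬ (0:ℕ) = q), if_pos rfl]; simp)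
      (by rw [cf1, if_pos rfl, if_neg (by omega : ¬ q = 0)]; simp)
      (by rw [cf1, cf1, if_pos rfl, if_neg (by omega : ¬ q = 0),
            if_neg (by omega : ¬ (0:ℕ) = q), if_pos rfl]; ring)
    exact ⟨h1, Or.inr h2, Or.inr h3⟩
  · have hdeg2 : ((Polynomial.X : Polynomial (Polynomial ℤ)) ^ q
        - Polynomial.C (Polynomial.X : Polynomial ℤ)).natDegree = q := by
      apply natDegree_eq_of_le_of_coeff_ne_zero
      · exact le_trans (natDegree_sub_le _ _) (by simp)
      · rw [coeff_sub, coeff_X_pow, if_pos rfl, coeff_C, if_neg (by omega : ¬ q = 0)]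
        simp
    obtain ⟨h1, h2, h3⟩ := Res41.main q hq ((Polynomial.X : Polynomial (Polynomial ℤ)) ^ q
        - Polynomial.C (Polynomial.X : Polynomial ℤ)) hdeg2
      (fun k hk0 hkq => by rw [cf2, if_neg hkq, if_neg hk0]; simp)
      (by rw [cf2, if_neg (by omega : ¬ (0:ℕ) = q), if_pos rfl]; simp)
      (by rw [cf2, if_pos rfl, if_neg (by omega : ¬ q = 0)]; simp)
      (by rw [cf2, cf2, if_pos rfl, if_neg (by omega : ¬ q = 0),
            if_neg (by omega : ¬ (0:ℕ) = q), if_pos rfl]; ring)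
    exact ⟨h1, Or.inr h2, Or.inr h3⟩
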